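/- Suppose a > 0, b ≠ 0, and U = (u,v) ∈ H²(0,ℓ;ℂ²) satisfies −u'' = λu, −v'' = λv on (0,ℓ) with λ ∈ ℝ, together with boundary conditions u'(0) + i(au(0) + bv(0)) = 0, v'(0) − ib u(0) = 0, u'(ℓ) = v'(ℓ) = 0. Then u = 0 and v = 0. (Hence the transverse operator has no real eigenvalues.) -/

import Mathlib

open Complex
open Set

set_option linter.unreachableTactic false
set_option linter.unusedTactic false
open Complex Set

noncomputable def Amap (lam : ℝ) : (ℂ × ℂ) →L[ℂ] (ℂ × ℂ) :=
  (ContinuousLinearMap.snd ℂ ℂ ℂ).prod ((-(lam:ℂ)) • ContinuousLinearMap.fst ℂ ℂ ℂ)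

lemma Amap_apply (lam : ℝ) (p : ℂ × ℂ) : Amap lam p = (p.2, -(lam:ℂ) * p.1) := by
  simp [Amap]

lemma ode_rep (ℓ : ℝ) (lam : ℝ) (c s : ℝ → ℂ)
    (hc : ∀ x, HasDerivAt c (-(lam:ℂ) * s x) x)
    (hs : ∀ x, HasDerivAt s (c x) x)
    (hc0 : c 0 = 1) (hs0 : s 0 = 0)
    (u : ℝ → ℂ) (hu : ContDiff ℝ 2 u)
    (hequ : ∀ x ∈ Set.Icc (0:ℝ) ℓ, -(deriv (deriv u)) x = (lam : ℂ) * u x) :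
    ∀ x ∈ Set.Icc (0:ℝ) ℓ, u x = u 0 * c x + deriv u 0 * s x ∧
      deriv u x = -(lam:ℂ) * (u 0 * s x) + deriv u 0 * c x := by
  have hud : Differentiable ℝ u := hu.differentiable (by norm_num)
  have hud' : Differentiable ℝ (deriv u) := by
    have h := (contDiff_succ_iff_deriv (n := 1)).mp (by norm_num at hu ⊢; exact hu)
    exact h.2.2.differentiable (by norm_num)
  set f : ℝ → ℂ × ℂ := fun x => (u x, deriv u x) with hf
  set g : ℝ → ℂ × ℂ := fun x =>
    (u 0 * c x + deriv u 0 * s x, -(lam:ℂ) * (u 0 * s x) + deriv u 0 * c x) with hg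
  have hgd : ∀ x, HasDerivAt g (Amap lam (g x)) x := by
    intro x
    have h1 : HasDerivAt (fun x => u 0 * c x + deriv u 0 * s x)
        (u 0 * (-(lam:ℂ) * s x) + deriv u 0 * c x) x :=
      ((hc x).const_mul (u 0)).add ((hs x).const_mul (deriv u 0))
    have h2 : HasDerivAt (fun x => -(lam:ℂ) * (u 0 * s x) + deriv u 0 * c x)
        (-(lam:ℂ) * (u 0 * c x) + deriv u 0 * (-(lam:ℂ) * s x)) x :=
      (((hs x).const_mul (u 0)).const_mul (-(lam:ℂ))).add ((hc x).const_mul (deriv u 0))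
    have := h1.prodMk h2
    rw [Amap_apply]
    convert this using 2 <;> ring
  have key : EqOn f g (Icc 0 ℓ) := by
    apply ODE_solution_unique (v := fun _ : ℝ => Amap lam) (fun _ => (Amap lam).lipschitz)
    · exact ((hud.continuous.prodMk hud'.continuous)).continuousOn
    · intro t ht
      have hfd : HasDerivAt f (deriv u t, deriv (deriv u) t) t :=
        (hud t).hasDerivAt.prodMk (hud' t).hasDerivAt
      have he : deriv (deriv u) t = -(lam:ℂ) * u t := by
        have h := hequ t (Ico_subset_Icc_self ht)
        linear_combination -h
      rw [Amap_apply]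
      rw [he] at hfd
      exact hfd.hasDerivWithinAt
    · exact fun x hx => (hgd x).continuousAt.continuousWithinAt
    · exact fun t ht => (hgd t).hasDerivWithinAt
    · simp [hf, hg, hc0, hs0]
  intro x hx
  have h := key hx
  simp only [hf, hg, Prod.mk.injEq] at h
  exact h

lemma alg (a b lam Cr Sr : ℝ) (ha : 0 < a) (hb : b ≠ 0) (hid : Cr^2 + lam * Sr^2 = 1)
    (u0 u1 v0 v1 : ℂ)
    (h1 : u1 + I * ((a:ℂ) * u0 + (b:ℂ) * v0) = 0)
    (h2 : v1 - I * (b:ℂ) * u0 = 0)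
    (h3 : -(lam:ℂ) * (u0 * (Sr:ℂ)) + u1 * (Cr:ℂ) = 0)
    (h4 : -(lam:ℂ) * (v0 * (Sr:ℂ)) + v1 * (Cr:ℂ) = 0) :
    u0 = 0 ∧ u1 = 0 ∧ v0 = 0 ∧ v1 = 0 := by
  set d : ℂ := ((b^2*Cr^2 - lam^2*Sr^2 : ℝ) : ℂ) + ((-(a*lam*Sr*Cr) : ℝ) : ℂ) * I with hd
  have hdne : d ≠ 0 := by
    intro h
    rw [hd] at h
    have hre : b^2*Cr^2 - lam^2*Sr^2 = 0 := by
      have h' := congrArg Complex.re h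
      simp only [Complex.add_re, Complex.mul_re, Complex.ofReal_re, Complex.ofReal_im,
        Complex.I_re, Complex.I_im, Complex.zero_re] at h'
      linarith [h']
    have him : a * (lam*Sr*Cr) = 0 := by
      have h' := congrArg Complex.im h
      simp only [Complex.add_im, Complex.mul_im, Complex.ofReal_re, Complex.ofReal_im,
        Complex.I_re, Complex.I_im, Complex.zero_im] at h'
      linarith [h']
    have hlsc : lam * Sr * Cr = 0 := by
      rcases mul_eq_zero.mp him with h' | h'
      · exact absurd h' ha.ne'
      · exact h'
    rcases mul_eq_zero.mp hlsc with h' | hC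
    · -- lam * Sr = 0
      have hb2 : b^2 ≠ 0 := pow_ne_zero 2 hb
      have hcc : b^2 * Cr^2 = 0 := by nlinarith [hre, sq_nonneg (lam*Sr), h']
      have hC2 : Cr^2 = 0 := by
        rcases mul_eq_zero.mp hcc with h'' | h''
        · exact absurd h'' hb2
        · exact h''
      have h1' : lam * Sr^2 = 1 := by nlinarith [hid, hC2]
      nlinarith [h1', h']
    · -- Cr = 0
      have h1' : lam * Sr^2 = 1 := by nlinarith [hid, hC]
      have h2' : lam^2 * Sr^2 = 0 := by nlinarith [hre, hC]
      have hlam : lam = 0 := by nlinarith [h1', h2']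
      nlinarith [h1', hlam]
  have hu0 : d * u0 = 0 := by
    rw [hd]
    push_cast
    linear_combination ((lam:ℂ)*Sr)*h3 - ((lam:ℂ)*Sr*Cr)*h1 - (I*(b:ℂ)*Cr)*h4
      + (I*(b:ℂ)*Cr^2)*h2 + ((b:ℂ)^2*Cr^2*u0)*Complex.I_mul_I
  have hv0 : d * v0 = 0 := by
    rw [hd]
    push_cast
    linear_combination ((lam:ℂ)*Sr + I*(a:ℂ)*Cr)*h4 - (((lam:ℂ)*Sr + I*(a:ℂ)*Cr)*Cr)*h2
      + (I*(b:ℂ)*Cr)*h3 - (I*(b:ℂ)*Cr^2)*h1 + ((b:ℂ)^2*Cr^2*v0)*Complex.I_mul_I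
  have hu0' : u0 = 0 := by
    rcases mul_eq_zero.mp hu0 with h | h; · exact absurd h hdne
    exact h
  have hv0' : v0 = 0 := by
    rcases mul_eq_zero.mp hv0 with h | h; · exact absurd h hdne
    exact h
  refine ⟨hu0', ?_, hv0', ?_⟩
  · linear_combination h1 - I*(a:ℂ)*hu0' - I*(b:ℂ)*hv0'
  · linear_combination h2 + I*(b:ℂ)*hu0'

lemma exists_cs (ℓ lam : ℝ) : ∃ (c s : ℝ → ℂ) (Cr Sr : ℝ),
    (∀ x, HasDerivAt c (-(lam:ℂ) * s x) x) ∧ (∀ x, HasDerivAt s (c x) x) ∧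
    c 0 = 1 ∧ s 0 = 0 ∧ c ℓ = (Cr:ℂ) ∧ s ℓ = (Sr:ℂ) ∧ Cr^2 + lam*Sr^2 = 1 := by
  have hofReal : ∀ x : ℝ, HasDerivAt (fun y : ℝ => (y:ℂ)) 1 x := by
    intro x
    simpa using (hasDerivAt_id x).ofReal_comp
  rcases eq_or_ne lam 0 with hl | hl
  · subst hl
    refine ⟨fun _ => 1, fun x => (x:ℂ), 1, ℓ, ?_, ?_, rfl, by simp, by simp, rfl, by simp⟩
    · intro x; simpa using hasDerivAt_const x (1:ℂ)
    · intro x; simpa using hofReal x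
  · set ω : ℂ := if 0 ≤ lam then ((Real.sqrt lam : ℝ) : ℂ) else ((Real.sqrt (-lam) : ℝ) : ℂ) * I
      with hω
    have hω2 : ω^2 = (lam:ℂ) := by
      rcases le_or_gt 0 lam with h | h
      · rw [hω, if_pos h]
        norm_cast
        rw [Real.sq_sqrt h]
      · rw [hω, if_neg (not_le.mpr h)]
        rw [mul_pow, I_sq, ← Complex.ofReal_pow, Real.sq_sqrt (by linarith : (0:ℝ) ≤ -lam)]
        push_cast; ring
    have hωne : ω ≠ 0 := by
      intro h
      rw [h] at hω2
      simp at hω2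
      exact hl (by exact_mod_cast hω2.symm)
    have hinner : ∀ x : ℝ, HasDerivAt (fun y : ℝ => ω * (y:ℂ)) ω x := by
      intro x
      simpa using (hofReal x).const_mul ω
    have hcder : ∀ x : ℝ, HasDerivAt (fun x : ℝ => Complex.cos (ω * x))
        (-(lam:ℂ) * (Complex.sin (ω * x) / ω)) x := by
      intro x
      have h1 : HasDerivAt (fun z : ℂ => Complex.cos (ω * z))
          (-Complex.sin (ω * (x:ℂ)) * (ω * 1)) (x:ℂ) :=
        ((hasDerivAt_id ((x:ℝ):ℂ)).const_mul ω).ccos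
      have h2 := h1.comp_ofReal
      convert h2 using 1
      rw [← hω2]
      field_simp
    have hsder : ∀ x : ℝ, HasDerivAt (fun x : ℝ => Complex.sin (ω * x) / ω)
        (Complex.cos (ω * x)) x := by
      intro x
      have h1 : HasDerivAt (fun z : ℂ => Complex.sin (ω * z))
          (Complex.cos (ω * (x:ℂ)) * (ω * 1)) (x:ℂ) :=
        ((hasDerivAt_id ((x:ℝ):ℂ)).const_mul ω).csin
      have h2 := h1.comp_ofReal.div_const ω
      convert h2 using 1
      · rfl
      · field_simp
    rcases le_or_gt 0 lam with h | h
    · -- lam > 0 (since lam ≠ 0)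
      have hlpos : 0 < lam := lt_of_le_of_ne h (Ne.symm hl)
      have hωval : ω = ((Real.sqrt lam : ℝ) : ℂ) := by rw [hω, if_pos h]
      have hsq : Real.sqrt lam ^ 2 = lam := Real.sq_sqrt h
      have hsne : Real.sqrt lam ≠ 0 := by positivity
      refine ⟨_, _, Real.cos (Real.sqrt lam * ℓ), Real.sin (Real.sqrt lam * ℓ) / Real.sqrt lam,
        hcder, hsder, by simp, by simp, ?_, ?_, ?_⟩
      · rw [hωval]; push_cast; try ring
      · rw [hωval]; push_cast; try ring
      · have := Real.sin_sq_add_cos_sq (Real.sqrt lam * ℓ)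
        field_simp
        all_goals nlinarith [this, hsq]
    · -- lam < 0
      have hωval : ω = ((Real.sqrt (-lam) : ℝ) : ℂ) * I := by rw [hω, if_neg (not_le.mpr h)]
      have hsq : Real.sqrt (-lam) ^ 2 = -lam := Real.sq_sqrt (by linarith)
      have hsne : Real.sqrt (-lam) ≠ 0 := Real.sqrt_ne_zero'.mpr (by linarith)
      refine ⟨_, _, Real.cosh (Real.sqrt (-lam) * ℓ),
        Real.sinh (Real.sqrt (-lam) * ℓ) / Real.sqrt (-lam),
        hcder, hsder, by simp, by simp, ?_, ?_, ?_⟩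
      · rw [hωval]
        rw [show ((Real.sqrt (-lam) : ℝ) : ℂ) * I * (ℓ:ℂ) = ((Real.sqrt (-lam) * ℓ : ℝ) : ℂ) * I
          by push_cast; ring]
        rw [Complex.cos_mul_I, Complex.ofReal_cosh]
      · have hsne' : ((Real.sqrt (-lam) : ℝ) : ℂ) ≠ 0 := by exact_mod_cast hsne
        rw [hωval]
        rw [show ((Real.sqrt (-lam) : ℝ) : ℂ) * I * (ℓ:ℂ) = ((Real.sqrt (-lam) * ℓ : ℝ) : ℂ) * I
          by push_cast; ring]
        rw [Complex.sin_mul_I]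
        push_cast
        field_simp
        try ring
      · have := Real.cosh_sq_sub_sinh_sq (Real.sqrt (-lam) * ℓ)
        field_simp
        all_goals nlinarith [this, hsq]

/-- No real eigenvalues for the transverse operator: if `a > 0`, `b ≠ 0`,
`λ ∈ ℝ`, and `(u,v)` solves `-u'' = λu`, `-v'' = λv` on `[0,ℓ]` with boundary
conditions `u'(0) + i(au(0) + bv(0)) = 0`, `v'(0) - ibu(0) = 0`,
`u'(ℓ) = v'(ℓ) = 0`, then `u = v = 0` on `[0,ℓ]`. -/
theorem no_real_eigenvalue (ℓ : ℝ) (hℓ : 0 < ℓ) (a b : ℝ) (ha : 0 < a) (hb : b ≠ 0)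
    (lam : ℝ) (u v : ℝ → ℂ)
    (hu : ContDiff ℝ 2 u) (hv : ContDiff ℝ 2 v)
    (hequ : ∀ x ∈ Set.Icc (0:ℝ) ℓ, -(deriv (deriv u)) x = (lam : ℂ) * u x)
    (heqv : ∀ x ∈ Set.Icc (0:ℝ) ℓ, -(deriv (deriv v)) x = (lam : ℂ) * v x)
    (hbc1 : deriv u 0 + I * ((a : ℂ) * u 0 + (b : ℂ) * v 0) = 0)
    (hbc2 : deriv v 0 - I * (b : ℂ) * u 0 = 0)
    (hbc3 : deriv u ℓ = 0) (hbc4 : deriv v ℓ = 0) :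
    ∀ x ∈ Set.Icc (0:ℝ) ℓ, u x = 0 ∧ v x = 0 := by
  obtain ⟨c, s, Cr, Sr, hc, hs, hc0, hs0, hcl, hsl, hid⟩ := exists_cs ℓ lam
  have repu := ode_rep ℓ lam c s hc hs hc0 hs0 u hu hequ
  have repv := ode_rep ℓ lam c s hc hs hc0 hs0 v hv heqv
  have hlmem : ℓ ∈ Set.Icc (0:ℝ) ℓ := ⟨hℓ.le, le_rfl⟩
  have h3 : -(lam:ℂ) * (u 0 * (Sr:ℂ)) + deriv u 0 * (Cr:ℂ) = 0 := by
    have := (repu ℓ hlmem).2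
    rw [hcl, hsl] at this
    rw [← this, hbc3]
  have h4 : -(lam:ℂ) * (v 0 * (Sr:ℂ)) + deriv v 0 * (Cr:ℂ) = 0 := by
    have := (repv ℓ hlmem).2
    rw [hcl, hsl] at this
    rw [← this, hbc4]
  obtain ⟨hu0, hu1, hv0, hv1⟩ := alg a b lam Cr Sr ha hb hid
    (u 0) (deriv u 0) (v 0) (deriv v 0) hbc1 hbc2 h3 h4
  intro x hx
  constructor
  · rw [(repu x hx).1, hu0, hu1]; ring
  · rw [(repv x hx).1, hv0, hv1]; ring
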